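/- Under Assumption (Lip), L_p < |𝒳|c_min, and 0 < φ < φ_max, the map Q ↦ B_{μ*_Q} Q maps the ball 𝔅 = {Q : ‖Q‖∞ ≤ ‖f‖∞/(1−γ)} into itself and satisfies, for all Q, Q' ∈ 𝔅, ‖B_{μ*_Q}Q − B_{μ*_{Q'}}Q'‖∞ ≤ k‖Q − Q'‖∞ with k = γ + (L_f + (γ/(1−γ))L_p‖f‖∞)·φ|𝒜|/(|𝒳|c_min − L_p) < 1; consequently it has a unique fixed point Q*φ in 𝔅. -/

import Mathlib

open Finset Filter
open scoped Classical

noncomputable section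

variable {X A : Type*}

/-- A probability vector on a finite set. -/
def IsProb [Fintype X] (μ : X → ℝ) : Prop := (∀ x, 0 ≤ μ x) ∧ ∑ x, μ x = 1

/-- ℓ¹ norm of a signed measure / vector on a finite set. -/
def l1 [Fintype X] (μ : X → ℝ) : ℝ := ∑ x, |μ x|

/-- Sup norm of a Q-table. -/
def supQ [Fintype X] [Fintype A] [Nonempty X] [Nonempty A] (Q : X → A → ℝ) : ℝ :=
  Finset.univ.sup' Finset.univ_nonempty (fun xa : X × A => |Q xa.1 xa.2|)

/-- Minimum of a row of a Q-table (minimum over actions). -/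
def minRow [Fintype A] [Nonempty A] (q : A → ℝ) : ℝ :=
  Finset.univ.inf' Finset.univ_nonempty q

/-- The soft-min distribution over actions with parameter φ. -/
def softmin [Fintype A] (φ : ℝ) (z : A → ℝ) (a : A) : ℝ :=
  Real.exp (-φ * z a) / ∑ a', Real.exp (-φ * z a')

/-- The argmin_e policy: uniform over the minimizers, zero elsewhere. -/
def argminE [Fintype A] [Nonempty A] (q : A → ℝ) (a : A) : ℝ :=
  if q a = minRow q then (1 : ℝ) / (Finset.univ.filter fun a' => q a' = minRow q).card else 0

/-- (P^{π,μ} ν)(x) = ∑_{x'} ν(x') ∑_a π(a|x') p(x|x',a,μ). -/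
def Ppush [Fintype X] [Fintype A] (p : X → A → (X → ℝ) → X → ℝ)
    (π : X → A → ℝ) (μ ν : X → ℝ) (x : X) : ℝ :=
  ∑ x', ν x' * ∑ a, π x' a * p x' a μ x

/-- P₂(Q,μ) = P^{softmin_φ Q, μ} μ − μ. -/
def P2 [Fintype X] [Fintype A] (φ : ℝ) (p : X → A → (X → ℝ) → X → ℝ)
    (Q : X → A → ℝ) (μ : X → ℝ) (x : X) : ℝ :=
  Ppush p (fun x' => softmin φ (Q x')) μ μ x - μ x

/-- The Bellman operator (B_μ Q)(x,a) = f(x,a,μ) + γ ∑_{x'} p(x'|x,a,μ) min_{a'} Q(x',a'). -/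
def bell [Fintype X] [Fintype A] [Nonempty A]
    (f : X → A → (X → ℝ) → ℝ) (p : X → A → (X → ℝ) → X → ℝ) (γ : ℝ)
    (μ : X → ℝ) (Q : X → A → ℝ) (x : X) (a : A) : ℝ :=
  f x a μ + γ * ∑ x', p x a μ x' * minRow (Q x')

/-- T₂(Q,μ) = B_μ Q − Q. -/
def T2 [Fintype X] [Fintype A] [Nonempty A]
    (f : X → A → (X → ℝ) → ℝ) (p : X → A → (X → ℝ) → X → ℝ) (γ : ℝ)
    (Q : X → A → ℝ) (μ : X → ℝ) (x : X) (a : A) : ℝ :=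
  bell f p γ μ Q x a - Q x a

section AuxLemmas
variable [Fintype X] [Fintype A] [Nonempty X] [Nonempty A]

lemma abs_le_supQ (Q : X → A → ℝ) (x : X) (a : A) : |Q x a| ≤ supQ Q :=
  Finset.le_sup' (fun xa : X × A => |Q xa.1 xa.2|) (mem_univ (x, a))

lemma supQ_nonneg (Q : X → A → ℝ) : 0 ≤ supQ Q :=
  le_trans (abs_nonneg _) (abs_le_supQ Q (Classical.arbitrary X) (Classical.arbitrary A))

lemma supQ_le (Q : X → A → ℝ) (M : ℝ) (h : ∀ x a, |Q x a| ≤ M) : supQ Q ≤ M :=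
  Finset.sup'_le _ _ (fun xa _ => h xa.1 xa.2)

lemma abs_minRow_le (q : A → ℝ) (M : ℝ) (h : ∀ a, |q a| ≤ M) : |minRow q| ≤ M := by
  obtain ⟨a, -, ha⟩ := Finset.exists_mem_eq_inf' univ_nonempty q
  rw [minRow, ha]; exact h a

lemma minRow_sub_le (q q' : A → ℝ) (M : ℝ) (h : ∀ a, |q a - q' a| ≤ M) :
    |minRow q - minRow q'| ≤ M := by
  rw [abs_le]
  constructor
  · obtain ⟨a, -, ha⟩ := Finset.exists_mem_eq_inf' univ_nonempty q
    have h1 : minRow q' ≤ q' a := Finset.inf'_le _ (mem_univ a)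
    have h2 := abs_le.mp (h a)
    have h3 : minRow q = q a := ha
    linarith [h2.1, h2.2]
  · obtain ⟨a, -, ha⟩ := Finset.exists_mem_eq_inf' univ_nonempty q'
    have h1 : minRow q ≤ q a := Finset.inf'_le _ (mem_univ a)
    have h2 := abs_le.mp (h a)
    have h3 : minRow q' = q' a := ha
    linarith [h2.1, h2.2]

lemma dist_eq_supQ_sub_le (Q Q' : X → A → ℝ) :
    supQ (fun x a => Q x a - Q' x a) ≤ dist Q Q' :=
  supQ_le _ _ fun x a => by
    have h1 : dist (Q x a) (Q' x a) ≤ dist (Q x) (Q' x) := dist_le_pi_dist (Q x) (Q' x) a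
    have h2 : dist (Q x) (Q' x) ≤ dist Q Q' := dist_le_pi_dist Q Q' x
    calc |Q x a - Q' x a| = dist (Q x a) (Q' x a) := (Real.dist_eq _ _).symm
      _ ≤ dist Q Q' := h1.trans h2

lemma dist_le_supQ_sub (Q Q' : X → A → ℝ) :
    dist Q Q' ≤ supQ (fun x a => Q x a - Q' x a) := by
  rw [dist_pi_le_iff (supQ_nonneg _)]
  intro x
  rw [dist_pi_le_iff (supQ_nonneg _)]
  intro a
  rw [Real.dist_eq]
  exact abs_le_supQ (fun x a => Q x a - Q' x a) x a
end AuxLemmas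

section Softmin
variable [Fintype A] [Nonempty A]

lemma softmin_pos (φ : ℝ) (z : A → ℝ) (a : A) : 0 < softmin φ z a :=
  div_pos (Real.exp_pos _) (Finset.sum_pos (fun _ _ => Real.exp_pos _) univ_nonempty)

lemma softmin_sum (φ : ℝ) (z : A → ℝ) : ∑ a, softmin φ z a = 1 := by
  unfold softmin
  rw [← Finset.sum_div]
  exact div_self (ne_of_gt (Finset.sum_pos (fun _ _ => Real.exp_pos _) univ_nonempty))

lemma softmin_lip (φ : ℝ) (hφ : 0 ≤ φ) (z z' : A → ℝ) (M : ℝ)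
    (hM : ∀ b, |z' b - z b| ≤ M) (a : A) :
    |softmin φ z' a - softmin φ z a| ≤ φ * M := by
  set δ : A → ℝ := fun b => z' b - z b with hδ
  set E : ℝ → A → ℝ := fun t b => Real.exp (-φ * (z b + t * δ b)) with hE
  set S : ℝ → ℝ := fun t => ∑ b, E t b with hS
  have hEpos : ∀ t b, 0 < E t b := fun t b => Real.exp_pos _
  have hSpos : ∀ t, 0 < S t := fun t => Finset.sum_pos (fun b _ => hEpos t b) univ_nonempty
  set h : ℝ → ℝ := fun t => E t a / S t with hh
  set h' : ℝ → ℝ := fun t =>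
    ((E t a * (-φ * δ a)) * S t - E t a * (∑ b, E t b * (-φ * δ b))) / (S t)^2 with hh'
  have hE' : ∀ t b, HasDerivAt (fun s => E s b) (E t b * (-φ * δ b)) t := by
    intro t b
    have h1 : HasDerivAt (fun s : ℝ => -φ * (z b + s * δ b)) (-φ * δ b) t := by
      have := ((hasDerivAt_mul_const (δ b) (x := t)).const_add (z b)).const_mul (-φ)
      simpa using this
    simpa [hE] using h1.exp
  have hderiv : ∀ t, HasDerivAt h (h' t) t := by
    intro t
    exact (hE' t a).div (HasDerivAt.fun_sum (fun b _ => hE' t b)) (hSpos t).ne'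
  have hM0 : 0 ≤ M := le_trans (abs_nonneg _) (hM (Classical.arbitrary A))
  have hbound : ∀ t, |h' t| ≤ φ * M := by
    intro t
    have hnum : (E t a * (-φ * δ a)) * S t - E t a * (∑ b, E t b * (-φ * δ b))
        = φ * E t a * ∑ b, E t b * (δ b - δ a) := by
      rw [hS, Finset.mul_sum, Finset.mul_sum, Finset.mul_sum, ← Finset.sum_sub_distrib]
      exact Finset.sum_congr rfl fun b _ => by ring
    have key : |∑ b, E t b * (δ b - δ a)| ≤ 2 * M * (S t - E t a) := by
      have e1 : ∑ b, E t b * (δ b - δ a) = ∑ b ∈ univ.erase a, E t b * (δ b - δ a) := by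
        rw [Finset.sum_erase _ (by simp)]
      rw [e1]
      calc |∑ b ∈ univ.erase a, E t b * (δ b - δ a)|
          ≤ ∑ b ∈ univ.erase a, |E t b * (δ b - δ a)| := Finset.abs_sum_le_sum_abs _ _
        _ ≤ ∑ b ∈ univ.erase a, E t b * (2 * M) := by
            apply Finset.sum_le_sum; intro b _
            rw [abs_mul, abs_of_pos (hEpos t b)]
            refine mul_le_mul_of_nonneg_left ?_ (hEpos t b).le
            calc |δ b - δ a| ≤ |δ b| + |δ a| := abs_sub _ _
              _ ≤ M + M := add_le_add (hM b) (hM a)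
              _ = 2 * M := by ring
        _ = (S t - E t a) * (2 * M) := by
            rw [← Finset.sum_mul, Finset.sum_erase_eq_sub (mem_univ a)]
        _ = 2 * M * (S t - E t a) := by ring
    have hnb : |φ * E t a * ∑ b, E t b * (δ b - δ a)| ≤ φ * M * (S t)^2 := by
      rw [abs_mul, abs_mul, abs_of_nonneg hφ, abs_of_pos (hEpos t a)]
      calc φ * E t a * |∑ b, E t b * (δ b - δ a)|
          ≤ φ * E t a * (2 * M * (S t - E t a)) :=
            mul_le_mul_of_nonneg_left key (by positivity)
        _ ≤ φ * M * (S t)^2 := by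
            nlinarith [mul_nonneg hφ hM0, sq_nonneg (S t - 2 * E t a), (hEpos t a).le, hφ, hM0]
    rw [hh']
    beta_reduce
    rw [hnum, abs_div, abs_of_pos (pow_pos (hSpos t) 2), div_le_iff₀ (pow_pos (hSpos t) 2)]
    exact hnb
  have mvt := Convex.norm_image_sub_le_of_norm_hasDerivWithin_le
    (f := h) (f' := h') (s := Set.univ) (C := φ * M)
    (fun t _ => (hderiv t).hasDerivWithinAt) (fun t _ => by simpa [Real.norm_eq_abs] using hbound t)
    convex_univ (Set.mem_univ 0) (Set.mem_univ 1)
  have h0 : h 0 = softmin φ z a := by simp [hh, hE, hS, softmin]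
  have h1 : h 1 = softmin φ z' a := by
    have e : ∀ b, z b + 1 * δ b = z' b := fun b => by show z b + 1 * (z' b - z b) = z' b; ring
    simp only [hh, hE, hS, softmin, e]
  have := mvt
  rw [h0, h1] at this
  simpa [Real.norm_eq_abs] using this
end Softmin

/-- the map Q ↦ B_{μ*_Q} Q maps the ball ‖Q‖∞ ≤ ‖f‖∞/(1−γ) into itself and is
a strict contraction there with constant
k = γ + (L_f + (γ/(1−γ))L_p‖f‖∞)·φ|𝒜|/(|𝒳|c_min − L_p) < 1; hence it has a unique fixed
point Q*φ in the ball. -/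
theorem mfc_Q_fixed_point [Fintype X] [Fintype A] [Nonempty X] [Nonempty A]
    (γ : ℝ) (hγ0 : 0 < γ) (hγ1 : γ < 1)
    (f : X → A → (X → ℝ) → ℝ) (fnorm : ℝ)
    (hf : ∀ x a μ, IsProb μ → |f x a μ| ≤ fnorm)
    (p : X → A → (X → ℝ) → X → ℝ)
    (hp0 : ∀ x a μ x', IsProb μ → 0 ≤ p x a μ x')
    (hp1 : ∀ x a μ, IsProb μ → ∑ x', p x a μ x' = 1)
    (cmin Lf Lp : ℝ) (hcmin0 : 0 ≤ cmin)
    (hcmin : ∀ x a μ x', IsProb μ → cmin ≤ p x a μ x')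
    (hLf0 : 0 ≤ Lf) (hLp0 : 0 ≤ Lp)
    (hLf : ∀ x a μ μ', IsProb μ → IsProb μ' →
      |f x a μ - f x a μ'| ≤ Lf * l1 (fun y => μ y - μ' y))
    (hLp : ∀ x a μ μ', IsProb μ → IsProb μ' →
      ∑ x', |p x a μ x' - p x a μ' x'| ≤ Lp * l1 (fun y => μ y - μ' y))
    (hLpc : Lp < (Fintype.card X : ℝ) * cmin)
    (φ : ℝ) (hφ0 : 0 < φ)
    (hφmax : φ < ((Fintype.card X : ℝ) * cmin - Lp) / (Fintype.card A : ℝ)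
        * ((1 - γ) / (Lf + (γ / (1 - γ)) * Lp * fnorm)))
    -- μ*_Q : the unique fixed point of μ ↦ P^{softmin_φ Q, μ} μ
    (mustar : (X → A → ℝ) → X → ℝ)
    (hmustar : ∀ Q : X → A → ℝ, IsProb (mustar Q) ∧
      Ppush p (fun x' => softmin φ (Q x')) (mustar Q) (mustar Q) = mustar Q)
    -- the contraction constant
    (k : ℝ)
    (hkdef : k = γ + (Lf + (γ / (1 - γ)) * Lp * fnorm) * φ * (Fintype.card A : ℝ)
        / ((Fintype.card X : ℝ) * cmin - Lp)) :
    (∀ Q : X → A → ℝ, supQ Q ≤ fnorm / (1 - γ) →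
        supQ (bell f p γ (mustar Q) Q) ≤ fnorm / (1 - γ))
    ∧ (∀ Q Q' : X → A → ℝ, supQ Q ≤ fnorm / (1 - γ) → supQ Q' ≤ fnorm / (1 - γ) →
        supQ (fun x a => bell f p γ (mustar Q) Q x a - bell f p γ (mustar Q') Q' x a)
          ≤ k * supQ (fun x a => Q x a - Q' x a))
    ∧ k < 1
    ∧ (∃! Qs : X → A → ℝ, supQ Qs ≤ fnorm / (1 - γ) ∧
        bell f p γ (mustar Qs) Qs = Qs) := by
  have h1γ : 0 < 1 - γ := by linarith
  set R : ℝ := fnorm / (1 - γ) with hR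
  set c : ℝ := (Fintype.card X : ℝ) * cmin - Lp with hc
  set D : ℝ := Lf + (γ / (1 - γ)) * Lp * fnorm with hD
  have hc0 : 0 < c := by rw [hc]; linarith
  have hcardA : (0:ℝ) < (Fintype.card A : ℝ) := by
    exact_mod_cast Fintype.card_pos
  -- some probability measure exists
  have hP0 := (hmustar (fun _ _ => 0)).1
  have hfn0 : 0 ≤ fnorm :=
    le_trans (abs_nonneg _) (hf (Classical.arbitrary X) (Classical.arbitrary A) _ hP0)
  have hR0 : 0 ≤ R := div_nonneg hfn0 h1γ.le
  have hXc : (Fintype.card X : ℝ) * cmin ≤ 1 := by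
    have h1 := hp1 (Classical.arbitrary X) (Classical.arbitrary A) _ hP0
    calc (Fintype.card X : ℝ) * cmin = ∑ _x' : X, cmin := by
          rw [Finset.sum_const, card_univ, nsmul_eq_mul]
      _ ≤ ∑ x', p (Classical.arbitrary X) (Classical.arbitrary A) (mustar (fun _ _ => 0)) x' :=
          Finset.sum_le_sum fun x' _ => hcmin _ _ _ x' hP0
      _ = 1 := h1
  have hD0 : 0 < D := by
    by_contra hle
    push_neg at hle
    have h2 : (1 - γ) / D ≤ 0 := div_nonpos_of_nonneg_of_nonpos h1γ.le hle
    have h3 : c / (Fintype.card A : ℝ) * ((1 - γ) / D) ≤ 0 :=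
      mul_nonpos_of_nonneg_of_nonpos (by positivity) h2
    linarith
  have hk1 : k < 1 := by
    rw [hkdef]
    have h3 : D * φ * (Fintype.card A : ℝ) / c < 1 - γ := by
      rw [div_lt_iff₀ hc0]
      have h4 := mul_lt_mul_of_pos_right hφmax
        (show 0 < D * (Fintype.card A : ℝ) by positivity)
      calc D * φ * (Fintype.card A : ℝ) = φ * (D * (Fintype.card A : ℝ)) := by ring
        _ < (c / (Fintype.card A : ℝ) * ((1 - γ) / D)) * (D * (Fintype.card A : ℝ)) := h4
        _ = (1 - γ) * c := by field_simp
    linarith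
  have hk0 : 0 < k := by
    rw [hkdef]
    have : 0 < D * φ * (Fintype.card A : ℝ) / c := by positivity
    linarith
  -- Part 1 : self map
  have part1 : ∀ Q : X → A → ℝ, supQ Q ≤ R → supQ (bell f p γ (mustar Q) Q) ≤ R := by
    intro Q hQ
    obtain ⟨hQP, -⟩ := hmustar Q
    apply supQ_le
    intro x a
    have hmr : ∀ x', |minRow (Q x')| ≤ R := fun x' =>
      abs_minRow_le _ _ (fun a' => le_trans (abs_le_supQ Q x' a') hQ)
    have hsum : |∑ x', p x a (mustar Q) x' * minRow (Q x')| ≤ R := by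
      calc |∑ x', p x a (mustar Q) x' * minRow (Q x')|
          ≤ ∑ x', |p x a (mustar Q) x' * minRow (Q x')| := Finset.abs_sum_le_sum_abs _ _
        _ ≤ ∑ x', p x a (mustar Q) x' * R := by
            apply Finset.sum_le_sum; intro x' _
            rw [abs_mul, abs_of_nonneg (hp0 x a _ x' hQP)]
            exact mul_le_mul_of_nonneg_left (hmr x') (hp0 x a _ x' hQP)
        _ = R := by rw [← Finset.sum_mul, hp1 x a _ hQP, one_mul]
    calc |bell f p γ (mustar Q) Q x a|
        ≤ |f x a (mustar Q)| + |γ * ∑ x', p x a (mustar Q) x' * minRow (Q x')| :=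
          abs_add_le _ _
      _ ≤ fnorm + γ * R := by
          refine add_le_add (hf x a _ hQP) ?_
          rw [abs_mul, abs_of_pos hγ0]
          exact mul_le_mul_of_nonneg_left hsum hγ0.le
      _ = R := by rw [hR]; field_simp; ring
  -- Stability of the mean-field fixed point
  have stab : ∀ Q Q' : X → A → ℝ,
      c * l1 (fun y => mustar Q y - mustar Q' y)
        ≤ φ * (Fintype.card A : ℝ) * supQ (fun x a => Q x a - Q' x a) := by
    intro Q Q'
    obtain ⟨hQP, hQfix⟩ := hmustar Q
    obtain ⟨hQ'P, hQ'fix⟩ := hmustar Q'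
    set μ : X → ℝ := mustar Q with hμ
    set μ' : X → ℝ := mustar Q' with hμ'
    set π : X → A → ℝ := fun x' => softmin φ (Q x') with hπ
    set π' : X → A → ℝ := fun x' => softmin φ (Q' x') with hπ'
    set ΔQ : ℝ := supQ (fun x a => Q x a - Q' x a) with hΔQ
    set L : ℝ := l1 (fun y => μ y - μ' y) with hLdef
    have hΔQ0 : 0 ≤ ΔQ := supQ_nonneg _
    have hπpos : ∀ x' a, 0 < π x' a := fun x' a => softmin_pos φ (Q x') a
    have hπ1 : ∀ x', ∑ a, π x' a = 1 := fun x' => softmin_sum φ (Q x')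
    have hπdiff : ∀ x', ∑ a, |π x' a - π' x' a| ≤ (Fintype.card A : ℝ) * (φ * ΔQ) := by
      intro x'
      calc ∑ a, |π x' a - π' x' a| ≤ ∑ _a : A, φ * ΔQ := by
            apply Finset.sum_le_sum; intro a _
            exact softmin_lip φ hφ0.le (Q' x') (Q x') ΔQ
              (fun b => abs_le_supQ (fun x a => Q x a - Q' x a) x' b) a
        _ = (Fintype.card A : ℝ) * (φ * ΔQ) := by
            rw [Finset.sum_const, card_univ, nsmul_eq_mul]
    have hKge : ∀ x x', cmin ≤ ∑ a, π x' a * p x' a μ x := by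
      intro x x'
      calc cmin = (∑ a, π x' a) * cmin := by rw [hπ1 x', one_mul]
        _ = ∑ a, π x' a * cmin := Finset.sum_mul _ _ _
        _ ≤ ∑ a, π x' a * p x' a μ x :=
            Finset.sum_le_sum fun a _ =>
              mul_le_mul_of_nonneg_left (hcmin x' a μ x hQP) (hπpos x' a).le
    have hKsum : ∀ x', ∑ x, ∑ a, π x' a * p x' a μ x = 1 := by
      intro x'
      rw [Finset.sum_comm]
      calc ∑ a, ∑ x, π x' a * p x' a μ x = ∑ a, π x' a * ∑ x, p x' a μ x :=
            Finset.sum_congr rfl fun a _ => (Finset.mul_sum _ _ _).symm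
        _ = ∑ a, π x' a := Finset.sum_congr rfl fun a _ => by rw [hp1 x' a μ hQP, mul_one]
        _ = 1 := hπ1 x'
    have hsum0 : ∑ x', (μ x' - μ' x') = 0 := by
      rw [Finset.sum_sub_distrib, hQP.2, hQ'P.2, sub_self]
    have hdec : ∀ x, μ x - μ' x =
        (∑ x', (μ x' - μ' x') * ∑ a, π x' a * p x' a μ x)
        + (∑ x', μ' x' * ∑ a, π x' a * (p x' a μ x - p x' a μ' x))
        + (∑ x', μ' x' * ∑ a, (π x' a - π' x' a) * p x' a μ' x) := by
      intro x
      have e1 : μ x = Ppush p π μ μ x := (congrFun hQfix x).symm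
      have e2 : μ' x = Ppush p π' μ' μ' x := (congrFun hQ'fix x).symm
      rw [e1, e2]
      unfold Ppush
      rw [← Finset.sum_add_distrib, ← Finset.sum_add_distrib, ← Finset.sum_sub_distrib]
      refine Finset.sum_congr rfl fun x' _ => ?_
      simp only [mul_sub, sub_mul, Finset.sum_sub_distrib]
      ring
    have hT1 : ∑ x, |∑ x', (μ x' - μ' x') * ∑ a, π x' a * p x' a μ x|
        ≤ (1 - (Fintype.card X : ℝ) * cmin) * L := by
      have e : ∀ x, ∑ x', (μ x' - μ' x') * ∑ a, π x' a * p x' a μ x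
          = ∑ x', (μ x' - μ' x') * ((∑ a, π x' a * p x' a μ x) - cmin) := by
        intro x
        have h5 : ∑ x', (μ x' - μ' x') * ((∑ a, π x' a * p x' a μ x) - cmin)
            = (∑ x', (μ x' - μ' x') * ∑ a, π x' a * p x' a μ x)
              - (∑ x', (μ x' - μ' x')) * cmin := by
          rw [Finset.sum_mul, ← Finset.sum_sub_distrib]
          exact Finset.sum_congr rfl fun x' _ => by ring
        rw [h5, hsum0]; ring
      calc ∑ x, |∑ x', (μ x' - μ' x') * ∑ a, π x' a * p x' a μ x|
          = ∑ x, |∑ x', (μ x' - μ' x') * ((∑ a, π x' a * p x' a μ x) - cmin)| :=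
            Finset.sum_congr rfl fun x _ => by rw [e x]
        _ ≤ ∑ x, ∑ x', |μ x' - μ' x'| * ((∑ a, π x' a * p x' a μ x) - cmin) := by
            apply Finset.sum_le_sum; intro x _
            refine (Finset.abs_sum_le_sum_abs _ _).trans (le_of_eq ?_)
            refine Finset.sum_congr rfl fun x' _ => ?_
            rw [abs_mul, abs_of_nonneg (sub_nonneg.mpr (hKge x x'))]
        _ = ∑ x', |μ x' - μ' x'| * ∑ x, ((∑ a, π x' a * p x' a μ x) - cmin) := by
            rw [Finset.sum_comm]
            exact Finset.sum_congr rfl fun x' _ => (Finset.mul_sum _ _ _).symm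
        _ = ∑ x', |μ x' - μ' x'| * (1 - (Fintype.card X : ℝ) * cmin) := by
            refine Finset.sum_congr rfl fun x' _ => ?_
            rw [Finset.sum_sub_distrib, hKsum x', Finset.sum_const, card_univ, nsmul_eq_mul]
        _ = (1 - (Fintype.card X : ℝ) * cmin) * L := by
            rw [hLdef]; unfold l1; rw [← Finset.sum_mul]; ring
    have hT2 : ∑ x, |∑ x', μ' x' * ∑ a, π x' a * (p x' a μ x - p x' a μ' x)| ≤ Lp * L := by
      calc ∑ x, |∑ x', μ' x' * ∑ a, π x' a * (p x' a μ x - p x' a μ' x)|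
          ≤ ∑ x, ∑ x', μ' x' * ∑ a, π x' a * |p x' a μ x - p x' a μ' x| := by
            apply Finset.sum_le_sum; intro x _
            refine (Finset.abs_sum_le_sum_abs _ _).trans (Finset.sum_le_sum fun x' _ => ?_)
            rw [abs_mul, abs_of_nonneg (hQ'P.1 x')]
            refine mul_le_mul_of_nonneg_left ?_ (hQ'P.1 x')
            refine (Finset.abs_sum_le_sum_abs _ _).trans (le_of_eq ?_)
            refine Finset.sum_congr rfl fun a _ => ?_
            rw [abs_mul, abs_of_pos (hπpos x' a)]
        _ = ∑ x', μ' x' * ∑ a, π x' a * ∑ x, |p x' a μ x - p x' a μ' x| := by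
            rw [Finset.sum_comm]
            refine Finset.sum_congr rfl fun x' _ => ?_
            rw [← Finset.mul_sum, Finset.sum_comm]
            congr 1
            exact Finset.sum_congr rfl fun a _ => (Finset.mul_sum _ _ _).symm
        _ ≤ ∑ x', μ' x' * ∑ a, π x' a * (Lp * L) := by
            apply Finset.sum_le_sum; intro x' _
            refine mul_le_mul_of_nonneg_left
              (Finset.sum_le_sum fun a _ =>
                mul_le_mul_of_nonneg_left ?_ (hπpos x' a).le) (hQ'P.1 x')
            exact hLp x' a μ μ' hQP hQ'P
        _ = Lp * L := by
            have e6 : ∀ x', ∑ a, π x' a * (Lp * L) = Lp * L := fun x' => by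
              rw [← Finset.sum_mul, hπ1 x', one_mul]
            calc ∑ x', μ' x' * ∑ a, π x' a * (Lp * L) = ∑ x', μ' x' * (Lp * L) :=
                  Finset.sum_congr rfl fun x' _ => by rw [e6 x']
              _ = Lp * L := by rw [← Finset.sum_mul, hQ'P.2, one_mul]
    have hT3 : ∑ x, |∑ x', μ' x' * ∑ a, (π x' a - π' x' a) * p x' a μ' x|
        ≤ φ * (Fintype.card A : ℝ) * ΔQ := by
      calc ∑ x, |∑ x', μ' x' * ∑ a, (π x' a - π' x' a) * p x' a μ' x|
          ≤ ∑ x, ∑ x', μ' x' * ∑ a, |π x' a - π' x' a| * p x' a μ' x := by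
            apply Finset.sum_le_sum; intro x _
            refine (Finset.abs_sum_le_sum_abs _ _).trans (Finset.sum_le_sum fun x' _ => ?_)
            rw [abs_mul, abs_of_nonneg (hQ'P.1 x')]
            refine mul_le_mul_of_nonneg_left ?_ (hQ'P.1 x')
            refine (Finset.abs_sum_le_sum_abs _ _).trans (le_of_eq ?_)
            refine Finset.sum_congr rfl fun a _ => ?_
            rw [abs_mul, abs_of_nonneg (hp0 x' a μ' x hQ'P)]
        _ = ∑ x', μ' x' * ∑ a, |π x' a - π' x' a| * ∑ x, p x' a μ' x := by
            rw [Finset.sum_comm]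
            refine Finset.sum_congr rfl fun x' _ => ?_
            rw [← Finset.mul_sum, Finset.sum_comm]
            congr 1
            exact Finset.sum_congr rfl fun a _ => (Finset.mul_sum _ _ _).symm
        _ = ∑ x', μ' x' * ∑ a, |π x' a - π' x' a| := by
            refine Finset.sum_congr rfl fun x' _ => ?_
            congr 1
            exact Finset.sum_congr rfl fun a _ => by rw [hp1 x' a μ' hQ'P, mul_one]
        _ ≤ ∑ x', μ' x' * ((Fintype.card A : ℝ) * (φ * ΔQ)) :=
            Finset.sum_le_sum fun x' _ =>
              mul_le_mul_of_nonneg_left (hπdiff x') (hQ'P.1 x')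
        _ = φ * (Fintype.card A : ℝ) * ΔQ := by
            rw [← Finset.sum_mul, hQ'P.2, one_mul]; ring
    have hLle : L ≤ (∑ x, |∑ x', (μ x' - μ' x') * ∑ a, π x' a * p x' a μ x|)
        + (∑ x, |∑ x', μ' x' * ∑ a, π x' a * (p x' a μ x - p x' a μ' x)|)
        + (∑ x, |∑ x', μ' x' * ∑ a, (π x' a - π' x' a) * p x' a μ' x|) := by
      rw [hLdef]
      unfold l1
      rw [← Finset.sum_add_distrib, ← Finset.sum_add_distrib]
      apply Finset.sum_le_sum
      intro x _
      calc |μ x - μ' x| = |(∑ x', (μ x' - μ' x') * ∑ a, π x' a * p x' a μ x)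
            + (∑ x', μ' x' * ∑ a, π x' a * (p x' a μ x - p x' a μ' x))
            + (∑ x', μ' x' * ∑ a, (π x' a - π' x' a) * p x' a μ' x)| := by rw [← hdec x]
        _ ≤ _ := abs_add_three _ _ _
    have hL0 : 0 ≤ L := Finset.sum_nonneg fun _ _ => abs_nonneg _
    have hfinal : L ≤ (1 - (Fintype.card X : ℝ) * cmin) * L + Lp * L
        + φ * (Fintype.card A : ℝ) * ΔQ := by linarith
    nlinarith [hfinal]
  -- Part 2 : contraction estimate
  have part2 : ∀ Q Q' : X → A → ℝ, supQ Q ≤ R → supQ Q' ≤ R →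
      supQ (fun x a => bell f p γ (mustar Q) Q x a - bell f p γ (mustar Q') Q' x a)
        ≤ k * supQ (fun x a => Q x a - Q' x a) := by
    intro Q Q' hQ hQ'
    obtain ⟨hQP, -⟩ := hmustar Q
    obtain ⟨hQ'P, -⟩ := hmustar Q'
    set μ : X → ℝ := mustar Q with hμ
    set μ' : X → ℝ := mustar Q' with hμ'
    set ΔQ : ℝ := supQ (fun x a => Q x a - Q' x a) with hΔQ
    set L : ℝ := l1 (fun y => μ y - μ' y) with hLdef
    have hΔQ0 : 0 ≤ ΔQ := supQ_nonneg _
    have hL0 : 0 ≤ L := Finset.sum_nonneg fun _ _ => abs_nonneg _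
    have hstab := stab Q Q'
    have hLle : L ≤ φ * (Fintype.card A : ℝ) * ΔQ / c :=
      (le_div_iff₀ hc0).mpr (by linarith)
    apply supQ_le
    intro x a
    have hfd : |f x a μ - f x a μ'| ≤ Lf * L := hLf x a μ μ' hQP hQ'P
    have hmid : |(∑ x', p x a μ x' * minRow (Q x')) - ∑ x', p x a μ' x' * minRow (Q' x')|
        ≤ ΔQ + Lp * L * R := by
      have split : (∑ x', p x a μ x' * minRow (Q x')) - ∑ x', p x a μ' x' * minRow (Q' x')
          = (∑ x', p x a μ x' * (minRow (Q x') - minRow (Q' x')))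
            + (∑ x', (p x a μ x' - p x a μ' x') * minRow (Q' x')) := by
        rw [← Finset.sum_add_distrib, ← Finset.sum_sub_distrib]
        exact Finset.sum_congr rfl fun x' _ => by ring
      rw [split]
      refine (abs_add_le _ _).trans (add_le_add ?_ ?_)
      · calc |∑ x', p x a μ x' * (minRow (Q x') - minRow (Q' x'))|
            ≤ ∑ x', p x a μ x' * ΔQ := by
              refine (Finset.abs_sum_le_sum_abs _ _).trans (Finset.sum_le_sum fun x' _ => ?_)
              rw [abs_mul, abs_of_nonneg (hp0 x a μ x' hQP)]
              refine mul_le_mul_of_nonneg_left ?_ (hp0 x a μ x' hQP)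
              exact minRow_sub_le _ _ _ fun a' =>
                abs_le_supQ (fun x a => Q x a - Q' x a) x' a'
          _ = ΔQ := by rw [← Finset.sum_mul, hp1 x a μ hQP, one_mul]
      · calc |∑ x', (p x a μ x' - p x a μ' x') * minRow (Q' x')|
            ≤ ∑ x', |p x a μ x' - p x a μ' x'| * R := by
              refine (Finset.abs_sum_le_sum_abs _ _).trans (Finset.sum_le_sum fun x' _ => ?_)
              rw [abs_mul]
              exact mul_le_mul_of_nonneg_left
                (abs_minRow_le _ _ fun a' => (abs_le_supQ Q' x' a').trans hQ') (abs_nonneg _)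
          _ = (∑ x', |p x a μ x' - p x a μ' x'|) * R := (Finset.sum_mul _ _ _).symm
          _ ≤ (Lp * L) * R :=
              mul_le_mul_of_nonneg_right (hLp x a μ μ' hQP hQ'P) hR0
          _ = Lp * L * R := rfl
    have hbelldiff : bell f p γ μ Q x a - bell f p γ μ' Q' x a
        = (f x a μ - f x a μ')
          + γ * ((∑ x', p x a μ x' * minRow (Q x')) - ∑ x', p x a μ' x' * minRow (Q' x')) := by
      unfold bell; ring
    calc |bell f p γ μ Q x a - bell f p γ μ' Q' x a|
        ≤ |f x a μ - f x a μ'|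
          + |γ| * |(∑ x', p x a μ x' * minRow (Q x')) - ∑ x', p x a μ' x' * minRow (Q' x')| := by
          rw [hbelldiff]
          exact (abs_add_le _ _).trans (by rw [abs_mul])
      _ ≤ Lf * L + γ * (ΔQ + Lp * L * R) := by
          refine add_le_add hfd ?_
          rw [abs_of_pos hγ0]
          exact mul_le_mul_of_nonneg_left hmid hγ0.le
      _ = γ * ΔQ + D * L := by
          rw [hD, hR]; field_simp; ring
      _ ≤ γ * ΔQ + D * (φ * (Fintype.card A : ℝ) * ΔQ / c) :=
          add_le_add le_rfl (mul_le_mul_of_nonneg_left hLle hD0.le)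
      _ = k * ΔQ := by rw [hkdef]; field_simp
  refine ⟨part1, part2, hk1, ?_⟩
  -- Part 4 : unique fixed point via Banach
  have hmem : ∀ Q : X → A → ℝ, (∀ x a, |Q x a| ≤ R) ↔ supQ Q ≤ R := fun Q =>
    ⟨fun h => supQ_le _ _ h, fun h x a => (abs_le_supQ Q x a).trans h⟩
  set S : Set (X → A → ℝ) := {Q | ∀ x a, |Q x a| ≤ R} with hSdef
  have hSclosed : IsClosed S := by
    have : S = ⋂ x, ⋂ a, {Q : X → A → ℝ | |Q x a| ≤ R} := by
      ext Q; simp [hSdef, Set.mem_iInter]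
    rw [this]
    refine isClosed_iInter fun x => isClosed_iInter fun a => ?_
    exact isClosed_le (Continuous.abs ((continuous_apply a).comp (continuous_apply x)))
      continuous_const
  haveI : CompleteSpace S := hSclosed.completeSpace_coe
  haveI : Nonempty S := ⟨⟨fun _ _ => 0, fun x a => by simpa using hR0⟩⟩
  set F : S → S := fun Q =>
    ⟨bell f p γ (mustar Q.1) Q.1, (hmem _).mpr (part1 Q.1 ((hmem _).mp Q.2))⟩ with hF
  set K : NNReal := ⟨k, hk0.le⟩ with hK
  have hcontr : ContractingWith K F := by
    constructor
    · exact_mod_cast hk1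
    · apply LipschitzWith.of_dist_le_mul
      intro Q Q'
      rw [Subtype.dist_eq, Subtype.dist_eq]
      have hK : (K : ℝ) = k := rfl
      rw [hK]
      calc dist (F Q).1 (F Q').1
          ≤ supQ (fun x a => (F Q).1 x a - (F Q').1 x a) := dist_le_supQ_sub _ _
        _ ≤ k * supQ (fun x a => Q.1 x a - Q'.1 x a) :=
            part2 Q.1 Q'.1 ((hmem _).mp Q.2) ((hmem _).mp Q'.2)
        _ ≤ k * dist Q.1 Q'.1 :=
            mul_le_mul_of_nonneg_left (dist_eq_supQ_sub_le _ _) hk0.le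
  set Qfix : S := ContractingWith.fixedPoint F hcontr with hQfix
  have hfixed : F Qfix = Qfix := ContractingWith.fixedPoint_isFixedPt hcontr
  have hfixval : bell f p γ (mustar Qfix.1) Qfix.1 = Qfix.1 := congrArg Subtype.val hfixed
  refine ⟨Qfix.1, ⟨(hmem _).mp Qfix.2, hfixval⟩, ?_⟩
  intro Q' ⟨hQ'R, hQ'fix⟩
  have h8 := part2 Q' Qfix.1 hQ'R ((hmem _).mp Qfix.2)
  simp only [hQ'fix, hfixval] at h8
  have h9 := supQ_nonneg (fun x a => Q' x a - Qfix.1 x a)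
  have h10 : supQ (fun x a => Q' x a - Qfix.1 x a) ≤ 0 := by nlinarith
  funext x a
  have h11 := (abs_le_supQ (fun x a => Q' x a - Qfix.1 x a) x a).trans h10
  have := abs_nonpos_iff.mp (by exact_mod_cast h11)
  have h12 : Q' x a - Qfix.1 x a = 0 := this
  linarith [h12]
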